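/- arXiv:2308.03069 — 2 statements merged into one kernel-verified Lean document; each statement's English description precedes it below -/
import Mathlib

section
/- Let Q be an integral commutative quantale, S a multiplicatively closed subset of Q, and P an ideal maximal among ideals disjoint from S (with respect to inclusion). Then P is a prime ideal. -/
class ICQuantale (Q : Type*) extends CompleteLattice Q, Mul Q where
  mul_assoc : ∀ x y z : Q, x * y * z = x * (y * z)
  mul_comm : ∀ x y : Q, x * y = y * x
  mul_sSup : ∀ (x : Q) (s : Set Q), x * sSup s = ⨆ y ∈ s, x * y
  mul_top : ∀ x : Q, x * ⊤ = x

variable {Q : Type*} [ICQuantale Q]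

def qpow (x : Q) : ℕ → Q
  | 0 => ⊤
  | n+1 => qpow x n * x

def IsIdeal (I : Set Q) : Prop :=
  I.Nonempty ∧ (∀ x ∈ I, ∀ y ∈ I, x ⊔ y ∈ I) ∧ (∀ x ∈ I, ∀ l, l ≤ x → l ∈ I)

def res (I J : Set Q) : Set Q := {x | ∀ j ∈ J, x * j ∈ I}

def prodIdeal (I J : Set Q) : Set Q :=
  {l | ∃ F : Finset (Q × Q), (∀ p ∈ F, p.1 ∈ I ∧ p.2 ∈ J) ∧ l ≤ F.sup (fun p => p.1 * p.2)}

def rad (I : Set Q) : Set Q := {x | ∃ n, 1 ≤ n ∧ qpow x n ∈ I}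

def IsPrimeIdeal (P : Set Q) : Prop :=
  IsIdeal P ∧ P ≠ Set.univ ∧ ∀ x y : Q, x * y ∈ P → x ∈ P ∨ y ∈ P

def IsPrimaryIdeal (I : Set Q) : Prop :=
  IsIdeal I ∧ I ≠ Set.univ ∧ ∀ x y : Q, x * y ∈ I → x ∈ I ∨ ∃ n, 1 ≤ n ∧ qpow y n ∈ I

def MultClosed (S : Set Q) : Prop := ⊤ ∈ S ∧ ∀ x ∈ S, ∀ y ∈ S, x * y ∈ S

def ann (S : Set Q) : Set Q := {x | ∀ s ∈ S, x * s = ⊥}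

lemma qmul_sup (x a b : Q) : x * (a ⊔ b) = x * a ⊔ x * b := by
  have h := ICQuantale.mul_sSup x {a, b}
  rw [sSup_pair] at h
  rw [h, iSup_pair]

lemma qmul_le_self (x y : Q) : x * y ≤ x := by
  have h : x * (y ⊔ ⊤) = x * y ⊔ x * ⊤ := qmul_sup x y ⊤
  rw [sup_top_eq, ICQuantale.mul_top] at h
  conv_rhs => rw [h]
  exact le_sup_left

lemma key_meets {S P : Set Q} (hS : MultClosed S) (hP : IsIdeal P) (hdisj : P ∩ S = ∅)
    (hmax : ∀ J : Set Q, IsIdeal J → J ∩ S = ∅ → P ⊆ J → J = P) {x : Q} (hx : x ∉ P) :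
    ∃ s ∈ S, ∃ p ∈ P, s ≤ p ⊔ x := by
  obtain ⟨p₀, hp₀⟩ := hP.1
  set J : Set Q := {l | ∃ p ∈ P, l ≤ p ⊔ x} with hJ
  have hJideal : IsIdeal J := by
    refine ⟨⟨x, p₀, hp₀, le_sup_right⟩, ?_, ?_⟩
    · rintro a ⟨p1, hp1, h1⟩ b ⟨p2, hp2, h2⟩
      exact ⟨p1 ⊔ p2, hP.2.1 p1 hp1 p2 hp2,
        sup_le (h1.trans (sup_le_sup_right le_sup_left x))
               (h2.trans (sup_le_sup_right le_sup_right x))⟩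
    · rintro a ⟨p1, hp1, h1⟩ l hl
      exact ⟨p1, hp1, hl.trans h1⟩
  have hPJ : P ⊆ J := fun p hp => ⟨p, hp, le_sup_left⟩
  by_contra hno
  push_neg at hno
  have hJS : J ∩ S = ∅ := by
    ext s; simp only [Set.mem_inter_iff, Set.mem_empty_iff_false, iff_false]
    rintro ⟨⟨p, hp, hle⟩, hsS⟩
    exact hno s hsS p hp hle
  have := hmax J hJideal hJS hPJ
  exact hx (this ▸ ⟨p₀, hp₀, le_sup_right⟩)

theorem stmt10 {S P : Set Q} (hS : MultClosed S) (hP : IsIdeal P) (hdisj : P ∩ S = ∅)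
    (hmax : ∀ J : Set Q, IsIdeal J → J ∩ S = ∅ → P ⊆ J → J = P) :
    IsPrimeIdeal P := by
  have hdisj' : ∀ a, a ∈ P → a ∈ S → False := by
    intro a h1 h2
    have : a ∈ P ∩ S := ⟨h1, h2⟩
    simp [hdisj] at this
  refine ⟨hP, ?_, ?_⟩
  · intro h
    exact hdisj' ⊤ (h ▸ Set.mem_univ ⊤) hS.1
  · intro x y hxy
    by_contra hcon
    push_neg at hcon
    obtain ⟨hx, hy⟩ := hcon
    obtain ⟨s₁, hs₁S, p₁, hp₁, h1⟩ := key_meets hS hP hdisj hmax hx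
    obtain ⟨s₂, hs₂S, p₂, hp₂, h2⟩ := key_meets hS hP hdisj hmax hy
    have hsS : s₁ * s₂ ∈ S := hS.2 s₁ hs₁S s₂ hs₂S
    -- s₁ * s₂ ≤ (p₁ ⊔ x) * (p₂ ⊔ y)
    have mono : ∀ a b c d : Q, a ≤ b → c ≤ d → a * c ≤ b * d := by
      intro a b c d hab hcd
      have h1 : a * c ≤ a * d := by
        have := qmul_sup a c d
        rw [sup_eq_right.mpr hcd] at this
        rw [this]; exact le_sup_left
      have h2 : a * d ≤ b * d := by
        rw [ICQuantale.mul_comm a d, ICQuantale.mul_comm b d]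
        have := qmul_sup d a b
        rw [sup_eq_right.mpr hab] at this
        rw [this]; exact le_sup_left
      exact h1.trans h2
    have hle : s₁ * s₂ ≤ (p₁ * p₂ ⊔ p₁ * y) ⊔ (x * p₂ ⊔ x * y) := by
      have := mono s₁ (p₁ ⊔ x) s₂ (p₂ ⊔ y) h1 h2
      calc s₁ * s₂ ≤ (p₁ ⊔ x) * (p₂ ⊔ y) := this
        _ = (p₁ * p₂ ⊔ p₁ * y) ⊔ (x * p₂ ⊔ x * y) := by
            rw [ICQuantale.mul_comm (p₁ ⊔ x) (p₂ ⊔ y), qmul_sup,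
              ICQuantale.mul_comm _ p₁, ICQuantale.mul_comm _ x, qmul_sup p₁, qmul_sup x]
    have hmemP : (p₁ * p₂ ⊔ p₁ * y) ⊔ (x * p₂ ⊔ x * y) ∈ P := by
      have m1 : p₁ * p₂ ∈ P := hP.2.2 p₁ hp₁ _ (qmul_le_self p₁ p₂)
      have m2 : p₁ * y ∈ P := hP.2.2 p₁ hp₁ _ (qmul_le_self p₁ y)
      have m3 : x * p₂ ∈ P := by
        apply hP.2.2 p₂ hp₂
        rw [ICQuantale.mul_comm]; exact qmul_le_self p₂ x
      exact hP.2.1 _ (hP.2.1 _ m1 _ m2) _ (hP.2.1 _ m3 _ hxy)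
    exact hdisj' (s₁ * s₂) (hP.2.2 _ hmemP _ hle) hsS
end

section
/- Let Q be an integral commutative quantale and I an ideal. Then R(I) equals the intersection of all prime ideals P of Q containing I. -/
variable {Q : Type*} [ICQuantale Q]

private lemma icq_mul_sup (a b c : Q) : a * (b ⊔ c) = a * b ⊔ a * c := by
  have h := ICQuantale.mul_sSup a {b, c}
  rw [sSup_pair] at h
  rw [h, iSup_pair]

private lemma icq_mul_le_right (a b : Q) : a * b ≤ b := by
  have h : b * a ⊔ b = b := by
    have h2 := icq_mul_sup b a ⊤
    rw [sup_top_eq, ICQuantale.mul_top] at h2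
    exact h2.symm
  rw [ICQuantale.mul_comm]
  exact le_of_le_of_eq le_sup_left h

private lemma icq_mul_le_left (a b : Q) : a * b ≤ a := by
  rw [ICQuantale.mul_comm]; exact icq_mul_le_right b a

private lemma icq_mul_mono {a b c d : Q} (h1 : a ≤ b) (h2 : c ≤ d) : a * c ≤ b * d := by
  have step1 : a * c ≤ a * d := by
    have := icq_mul_sup a c d
    rw [sup_eq_right.mpr h2] at this
    exact this ▸ le_sup_left
  have step2 : a * d ≤ b * d := by
    have := icq_mul_sup d a b
    rw [sup_eq_right.mpr h1] at this
    rw [ICQuantale.mul_comm a d, ICQuantale.mul_comm b d]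
    exact this ▸ le_sup_left
  exact step1.trans step2

private lemma qpow_one (x : Q) : qpow x 1 = x := by
  show qpow x 0 * x = x
  show (⊤ : Q) * x = x
  rw [ICQuantale.mul_comm, ICQuantale.mul_top]

private lemma qpow_add (x : Q) (m n : ℕ) : qpow x (m + n) = qpow x m * qpow x n := by
  induction n with
  | zero => simp [qpow, ICQuantale.mul_top]
  | succ k ih =>
    show qpow x (m + k) * x = qpow x m * (qpow x k * x)
    rw [ih, ICQuantale.mul_assoc]

private lemma prime_qpow {P : Set Q} (hP : IsPrimeIdeal P) {x : Q} {n : ℕ} (hn : 1 ≤ n)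
    (h : qpow x n ∈ P) : x ∈ P := by
  induction n with
  | zero => omega
  | succ k ih =>
    rcases Nat.eq_or_lt_of_le hn with h1 | h1
    · rwa [← h1, qpow_one] at h
    · rcases hP.2.2 _ _ h with h2 | h2
      · exact ih (by omega) h2
      · exact h2

theorem stmt14 {I : Set Q} (hI : IsIdeal I) :
    rad I = ⋂₀ {P : Set Q | IsPrimeIdeal P ∧ I ⊆ P} := by
  apply Set.Subset.antisymm
  · rintro x ⟨n, hn, hxn⟩ P ⟨hP, hIP⟩
    exact prime_qpow hP hn (hIP hxn)
  · intro x hx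
    by_contra hxr
    -- x ∉ rad I : no power of x is in I
    have hdisj : ∀ n, 1 ≤ n → qpow x n ∉ I := by
      intro n hn h; exact hxr ⟨n, hn, h⟩
    set S : Set (Set Q) := {J | IsIdeal J ∧ I ⊆ J ∧ ∀ n, 1 ≤ n → qpow x n ∉ J} with hS
    have hIS : I ∈ S := ⟨hI, Set.Subset.rfl, hdisj⟩
    obtain ⟨P, hIP, hPmem, hPmax⟩ : ∃ P, I ⊆ P ∧ P ∈ S ∧ ∀ J ∈ S, P ⊆ J → J ⊆ P := by
      have hub : ∀ c ⊆ S, IsChain (· ⊆ ·) c → c.Nonempty →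
          ∃ ub ∈ S, ∀ s ∈ c, s ⊆ ub := by
        intro c hcS hchain hcne
        refine ⟨⋃₀ c, ⟨⟨?_, ?_, ?_⟩, ?_, ?_⟩, fun s hs => Set.subset_sUnion_of_mem hs⟩
        · obtain ⟨J, hJ⟩ := hcne
          obtain ⟨y, hy⟩ := (hcS hJ).1.1
          exact ⟨y, J, hJ, hy⟩
        · rintro a ⟨A, hA, haA⟩ b ⟨B, hB, hbB⟩
          rcases hchain.total hA hB with h | h
          · exact ⟨B, hB, (hcS hB).1.2.1 a (h haA) b hbB⟩
          · exact ⟨A, hA, (hcS hA).1.2.1 a haA b (h hbB)⟩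
        · rintro a ⟨A, hA, haA⟩ l hl
          exact ⟨A, hA, (hcS hA).1.2.2 a haA l hl⟩
        · obtain ⟨J, hJ⟩ := hcne
          exact ((hcS hJ).2.1).trans (Set.subset_sUnion_of_mem hJ)
        · rintro n hn ⟨A, hA, hxA⟩
          exact (hcS hA).2.2 n hn hxA
      obtain ⟨P, hIP, hmax⟩ := zorn_subset_nonempty S hub I hIS
      exact ⟨P, hIP, hmax.1, fun J hJ hPJ => hmax.2 hJ hPJ⟩
    obtain ⟨hPid, hIsubP, hPdisj⟩ := hPmem
    -- P is prime
    have key : ∀ a : Q, a ∉ P → ∃ m p, 1 ≤ m ∧ p ∈ P ∧ qpow x m ≤ p ⊔ a := by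
      intro a ha
      set J : Set Q := {l | ∃ p ∈ P, l ≤ p ⊔ a} with hJ
      have hJid : IsIdeal J := by
        refine ⟨⟨a, ?_⟩, ?_, ?_⟩
        · obtain ⟨p, hp⟩ := hPid.1
          exact ⟨p, hp, le_sup_right⟩
        · rintro u ⟨p, hp, hu⟩ v ⟨q, hq, hv⟩
          exact ⟨p ⊔ q, hPid.2.1 p hp q hq,
            sup_le (hu.trans (sup_le_sup_right le_sup_left a))
              (hv.trans (sup_le_sup_right le_sup_right a))⟩
        · rintro u ⟨p, hp, hu⟩ l hl
          exact ⟨p, hp, hl.trans hu⟩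
      have hPJ : P ⊆ J := by
        intro p hp; exact ⟨p, hp, le_sup_left⟩
      have haJ : a ∈ J := by
        obtain ⟨p, hp⟩ := hPid.1
        exact ⟨p, hp, le_sup_right⟩
      have hJnotS : J ∉ S := by
        intro hJS
        exact ha (hPmax J hJS hPJ haJ)
      have : ¬ (∀ n, 1 ≤ n → qpow x n ∉ J) := by
        intro h
        exact hJnotS ⟨hJid, hIsubP.trans hPJ, h⟩
      push_neg at this
      obtain ⟨m, hm, p, hp, hle⟩ := this
      exact ⟨m, p, hm, hp, hle⟩
    have hPprime : IsPrimeIdeal P := by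
      refine ⟨hPid, ?_, ?_⟩
      · intro h
        exact hPdisj 1 le_rfl (h ▸ Set.mem_univ _)
      · intro a b hab
        by_contra hcon
        push_neg at hcon
        obtain ⟨ha, hb⟩ := hcon
        obtain ⟨m, p, hm, hp, hpa⟩ := key a ha
        obtain ⟨k, q, hk, hq, hqb⟩ := key b hb
        have hle : qpow x (m + k) ≤ (p ⊔ a) * (q ⊔ b) := by
          rw [qpow_add]; exact icq_mul_mono hpa hqb
        have hsplit : (p ⊔ a) * (q ⊔ b) = (p ⊔ a) * q ⊔ (p ⊔ a) * b := icq_mul_sup _ _ _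
        have h2 : (p ⊔ a) * b ≤ p ⊔ a * b := by
          rw [ICQuantale.mul_comm, icq_mul_sup]
          refine sup_le ((icq_mul_le_right b p).trans le_sup_left) ?_
          rw [ICQuantale.mul_comm b a]; exact le_sup_right
        have hbound : (p ⊔ a) * (q ⊔ b) ≤ q ⊔ (p ⊔ a * b) := by
          rw [hsplit]
          exact sup_le ((icq_mul_le_right _ q).trans le_sup_left)
            (h2.trans le_sup_right)
        have hmem : q ⊔ (p ⊔ a * b) ∈ P :=
          hPid.2.1 q hq _ (hPid.2.1 p hp _ hab)
        exact hPdisj (m + k) (by omega) (hPid.2.2 _ hmem _ (hle.trans hbound))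
    exact hPdisj 1 le_rfl ((qpow_one x).symm ▸ hx P ⟨hPprime, hIsubP⟩)
end
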